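/- For every d ≥ 1, the graph G_d is diamond-free, i.e., it contains no induced subgraph isomorphic to K_4 minus an edge. -/

import Mathlib

open SimpleGraph

/-- Sorted list of the tuple set `S^d`: tuples with entries in {1,3} except
the last entry which is in {1,2,3,4}, of length between 1 and `d`,
listed in lexicographic order. -/
def Tl : ℕ → List (List ℕ)
  | 0 => []
  | k+1 => [[1]] ++ (Tl k).map (fun a => 1 :: a) ++ [[2], [3]]
            ++ (Tl k).map (fun a => 3 :: a) ++ [[4]]

/-- Strict lexicographic order on tuples (a proper prefix is smaller). -/
def lexLt (a b : List ℕ) : Prop := List.Lex (· < ·) a b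

def lexLe (a b : List ℕ) : Prop := a = b ∨ lexLt a b

/-- `v` is the successor of `u` in the lexicographic order on `S^d`. -/
def IsSucc (d : ℕ) (u v : List ℕ) : Prop :=
  v ∈ Tl d ∧ lexLt u v ∧ ∀ w ∈ Tl d, lexLt u w → lexLe v w

/-- The interval `[a,b]` in `S^d`. -/
def interval (d : ℕ) (a b : List ℕ) : Set (List ℕ) :=
  {c | c ∈ Tl d ∧ lexLe a c ∧ lexLe c b}

/-- `[a,b]` is a proper interval: no interior element has length `l(a)` or `l(b)`. -/
def ProperInterval (d : ℕ) (a b : List ℕ) : Prop :=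
  a ∈ Tl d ∧ b ∈ Tl d ∧ lexLe a b ∧
  ∀ c ∈ interval d a b, c ≠ a → c ≠ b →
    c.length ≠ a.length ∧ c.length ≠ b.length

/-- The set of left endpoints of flat steps of the interval `[a,b]`. -/
def flatSteps (d : ℕ) (a b : List ℕ) : Set (List ℕ) :=
  {c | c ∈ Tl d ∧ lexLe a c ∧ lexLt c b ∧ ∃ v, IsSucc d c v ∧ v.length = c.length}

/-- Vertices of `G_d`: elements of `S^d`, subdivision vertices, and centers. -/
inductive Vtx where
  | elt : List ℕ → Vtx
  | sub : ℕ → Fin 2 → Vtx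
  | ctr : ℕ → Vtx
deriving DecidableEq

/-- The path `P_d` as a list of vertices: the elements of `S^d` in order,
with two subdivision vertices between consecutive elements of equal length
and one otherwise. -/
def pathList (d : ℕ) : List Vtx :=
  ((List.range (Tl d).length).zip (Tl d)).flatMap (fun p =>
    Vtx.elt p.2 :: (match (Tl d)[p.1 + 1]? with
      | none => []
      | some b =>
        if p.2.length = b.length then [Vtx.sub p.1 0, Vtx.sub p.1 1]
        else [Vtx.sub p.1 0]))

/-- `x` and `y` are consecutive in the list `l`. -/
def ChainAdj {α : Type} (l : List α) (x y : α) : Prop :=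
  ∃ i, (l[i]? = some x ∧ l[i+1]? = some y) ∨
       (l[i]? = some y ∧ l[i+1]? = some x)

/-- Adjacency from a center vertex. -/
def ctrAdj (d : ℕ) : Vtx → Vtx → Prop
  | Vtx.ctr k, Vtx.ctr m => k ≠ m ∧ 1 ≤ k ∧ k ≤ d ∧ 1 ≤ m ∧ m ≤ d
  | Vtx.ctr k, Vtx.elt a => 1 ≤ k ∧ k ≤ d ∧ a ∈ Tl d ∧ a.length = k
  | _, _ => False

/-- The vertex set of `G_d`. -/
def VSet (d : ℕ) : Finset Vtx :=
  (pathList d).toFinset ∪ (Finset.Icc 1 d).image Vtx.ctr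

def GdAdj (d : ℕ) (x y : Vtx) : Prop :=
  x ≠ y ∧ (ChainAdj (pathList d) x y ∨ ctrAdj d x y ∨ ctrAdj d y x)

/-- The graph `G_d`. -/
def Gd (d : ℕ) : SimpleGraph {x // x ∈ VSet d} where
  Adj x y := GdAdj d x.1 y.1
  symm := ⟨by
    rintro x y ⟨hne, h⟩
    refine ⟨hne.symm, ?_⟩
    rcases h with ⟨i, hi⟩ | h | h
    · exact Or.inl ⟨i, hi.symm⟩
    · exact Or.inr (Or.inr h)
    · exact Or.inr (Or.inl h)⟩
  loopless := ⟨fun x h => h.1 rfl⟩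

/-- A rank decomposition of a graph `G`: a finite cubic tree together with a
bijection from the vertices of `G` to the leaves of the tree. -/
structure RankDecomp {V : Type} [Fintype V] (G : SimpleGraph V) where
  t : Type
  fin : Fintype t
  tree : SimpleGraph t
  conn : tree.Connected
  acyc : tree.IsAcyclic
  two_le : 2 ≤ Nat.card t
  cubic : ∀ v : t, (tree.neighborSet v).ncard = 1 ∨ (tree.neighborSet v).ncard = 3
  leafEquiv : V ≃ {v : t // (tree.neighborSet v).ncard = 1}

/-- The set of vertices of `G` whose leaf lies on the side of `a` of
the edge `ab` of the decomposition tree. -/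
def RankDecomp.side {V : Type} [Fintype V] {G : SimpleGraph V}
    (D : RankDecomp G) (a b : D.t) : Set V :=
  {x | (D.tree.deleteEdges {s(a, b)}).Reachable (D.leafEquiv x).1 a}

/-- The cutrank function of `G`: the GF(2)-rank of the adjacency submatrix
between `X` and its complement. -/
noncomputable def cutRank {V : Type} [Fintype V] (G : SimpleGraph V) (X : Set V) : ℕ :=
  haveI : Fintype ↥X := Fintype.ofFinite _
  haveI : Fintype ↥(Xᶜ) := Fintype.ofFinite _
  haveI : DecidableRel G.Adj := Classical.decRel _
  Matrix.rank (Matrix.of (fun (x : ↥X) (y : ↥(Xᶜ)) =>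
    if G.Adj x.1 y.1 then (1 : ZMod 2) else 0))

/-- The decomposition `D` has width at most `k`. -/
def RankDecomp.WidthLE {V : Type} [Fintype V] {G : SimpleGraph V}
    (D : RankDecomp G) (k : ℕ) : Prop :=
  ∀ a b : D.t, D.tree.Adj a b → cutRank G (D.side a b) ≤ k

/-- The rank-width of `G`. -/
noncomputable def rankwidth {V : Type} [Fintype V] (G : SimpleGraph V) : ℕ :=
  sInf {k | ∃ D : RankDecomp G, D.WidthLE k}

/-- `l` is an induced path in `G`: its vertices are distinct and two of them
are adjacent in `G` iff they are consecutive on `l`. -/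
def IsInducedPathList {V : Type} (G : SimpleGraph V) (l : List V) : Prop :=
  l.Nodup ∧ ∀ x ∈ l, ∀ y ∈ l, (G.Adj x y ↔ ChainAdj l x y)

/-- The diamond: the complete graph on four vertices minus an edge. -/
def diamond : SimpleGraph (Fin 4) := (⊤ : SimpleGraph (Fin 4)).deleteEdges {s(2, 3)}

lemma Tl_ne_nil : ∀ {d : ℕ}, ∀ a ∈ Tl d, a ≠ [] := by
  intro d
  induction d with
  | zero => simp [Tl]
  | succ k ih =>
    intro a ha
    simp [Tl] at ha
    rcases ha with h | ⟨x, hx, h⟩ | h | h | ⟨x, hx, h⟩ | h <;> subst h <;> simp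

lemma Tl_nodup (d : ℕ) : (Tl d).Nodup := by
  induction d with
  | zero => simp [Tl]
  | succ k ih =>
    have hne := @Tl_ne_nil k
    have h1 : ((Tl k).map (fun a => 1 :: a)).Nodup :=
      ih.map (fun a b h => by injection h)
    have h3 : ((Tl k).map (fun a => 3 :: a)).Nodup :=
      ih.map (fun a b h => by injection h)
    simp only [Tl, List.nodup_append, List.Disjoint]
    simp_all
    refine ⟨?_, ?_⟩
    · rintro a (⟨a1,ha1,rfl⟩|rfl|rfl) x hx h <;> simp_all
    · rintro a (⟨a1,ha1,rfl⟩|rfl|rfl|⟨a1,ha1,rfl⟩) <;> simp_all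


def R (L : List (List ℕ)) : Vtx → Vtx → Prop
  | Vtx.elt a, Vtx.sub k j => j = 0 ∧ L[k]? = some a
  | Vtx.sub k j, Vtx.sub k' j' => j = 0 ∧ j' = 1 ∧ k' = k ∧
      ∃ a b, L[k]? = some a ∧ L[k+1]? = some b ∧ a.length = b.length
  | Vtx.sub k j, Vtx.elt b => L[k+1]? = some b ∧
      ∃ a, L[k]? = some a ∧ (j = 1 ↔ a.length = b.length)
  | _, _ => False

def blk (L : List (List ℕ)) (p : ℕ × List ℕ) : List Vtx :=
  Vtx.elt p.2 :: (match L[p.1 + 1]? with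
    | none => []
    | some b =>
      if p.2.length = b.length then [Vtx.sub p.1 0, Vtx.sub p.1 1]
      else [Vtx.sub p.1 0])


@[simp] lemma R_elt_sub (L : List (List ℕ)) (a : List ℕ) (k : ℕ) (j : Fin 2) :
    R L (Vtx.elt a) (Vtx.sub k j) = (j = 0 ∧ L[k]? = some a) := rfl
@[simp] lemma R_sub_sub (L : List (List ℕ)) (k k' : ℕ) (j j' : Fin 2) :
    R L (Vtx.sub k j) (Vtx.sub k' j') = (j = 0 ∧ j' = 1 ∧ k' = k ∧
      ∃ a b, L[k]? = some a ∧ L[k+1]? = some b ∧ a.length = b.length) := rfl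
@[simp] lemma R_sub_elt (L : List (List ℕ)) (k : ℕ) (j : Fin 2) (b : List ℕ) :
    R L (Vtx.sub k j) (Vtx.elt b) = (L[k+1]? = some b ∧
      ∃ a, L[k]? = some a ∧ (j = 1 ↔ a.length = b.length)) := rfl
@[simp] lemma R_elt_elt (L : List (List ℕ)) (a b : List ℕ) :
    R L (Vtx.elt a) (Vtx.elt b) = False := rfl
@[simp] lemma R_ctr_left (L : List (List ℕ)) (k : ℕ) (y : Vtx) :
    R L (Vtx.ctr k) y = False := by cases y <;> rfl
@[simp] lemma R_ctr_right (L : List (List ℕ)) (k : ℕ) (x : Vtx) :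
    R L x (Vtx.ctr k) = False := by cases x <;> rfl

lemma pathList_eq (d : ℕ) : pathList d = ((List.range (Tl d).length).zip (Tl d)).flatMap (blk (Tl d)) := rfl

lemma chain'_gen (L : List (List ℕ)) : ∀ (M : List (List ℕ)) (n : ℕ), M = L.drop n →
    List.IsChain (R L) (((List.range' n M.length).zip M).flatMap (blk L)) := by
  intro M
  induction M with
  | nil => intro n _; simp
  | cons a M' ih =>
    intro n hM
    have hga : L[n]? = some a := by
      have h0 : (L.drop n)[0]? = L[n + 0]? := List.getElem?_drop
      rw [← hM] at h0; simpa using h0.symm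
    have hgaE : L[n]? = some a := hga
    have hM' : M' = L.drop (n+1) := by
      have h2 : L.drop (n+1) = (L.drop n).drop 1 := by rw [List.drop_drop]
      rw [h2, ← hM]; simp
    rw [List.length_cons, List.range'_succ, List.zip_cons_cons, List.flatMap_cons, List.isChain_append]
    refine ⟨?_, ih (n+1) hM', ?_⟩
    · -- Chain' within block
      simp only [blk]
      rcases h : L[n+1]? with _ | b
      · simp
      · show List.IsChain (R L) (Vtx.elt a ::
            if a.length = b.length then [Vtx.sub n 0, Vtx.sub n 1] else [Vtx.sub n 0])
        by_cases hl : a.length = b.length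
        · rw [if_pos hl]
          refine List.isChain_cons_cons.2 ⟨by simp [hga, hgaE], List.isChain_cons_cons.2 ⟨?_, by simp⟩⟩
          rw [R_sub_sub]
          exact ⟨rfl, rfl, rfl, a, b, hga, h, hl⟩
        · rw [if_neg hl]
          exact List.isChain_cons_cons.2 ⟨by simp [hga, hgaE], by simp⟩
    · -- boundary
      intro x hx y hy
      rcases M' with _ | ⟨a', M''⟩
      · simp at hy
      · have hga' : L[n+1]? = some a' := by
          have h0 : (L.drop (n+1))[0]? = L[n + 1 + 0]? := List.getElem?_drop
          rw [← hM'] at h0; simpa using h0.symm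
        have hhd : y = Vtx.elt a' := by
          rw [List.length_cons, List.range'_succ, List.zip_cons_cons, List.flatMap_cons] at hy
          simp [blk] at hy
          exact hy.symm
        subst hhd
        simp only [blk] at hx
        rw [hga'] at hx
        have hx' : x ∈ (Vtx.elt a :: if a.length = a'.length then
            [Vtx.sub n 0, Vtx.sub n 1] else [Vtx.sub n 0]).getLast? := hx
        clear hx
        by_cases hl : a.length = a'.length
        · rw [if_pos hl] at hx'
          simp at hx'
          subst hx'
          simp only [R_sub_elt]
          exact ⟨hga', a, hga, by simp [hl]⟩
        · rw [if_neg hl] at hx'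
          simp at hx'
          subst hx'
          simp only [R_sub_elt]
          refine ⟨hga', a, hga, ?_⟩
          constructor
          · intro h10; exact absurd h10 (by decide)
          · intro hle; exact absurd hle hl

lemma chainR (d : ℕ) : List.IsChain (R (Tl d)) (pathList d) := by
  rw [pathList_eq, List.range_eq_range']
  exact chain'_gen (Tl d) (Tl d) 0 (by simp)

lemma pair_R {d i : ℕ} {x y : Vtx} (hx : (pathList d)[i]? = some x)
    (hy : (pathList d)[i+1]? = some y) : R (Tl d) x y := by
  have hc := chainR d
  obtain ⟨hi, hxe⟩ := List.getElem?_eq_some_iff.1 hx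
  obtain ⟨hi1, hye⟩ := List.getElem?_eq_some_iff.1 hy
  have := hc.getElem i hi1
  rw [hxe, hye] at this
  exact this

lemma chainAdj_R {d : ℕ} {x y : Vtx} (h : ChainAdj (pathList d) x y) :
    R (Tl d) x y ∨ R (Tl d) y x := by
  obtain ⟨i, ⟨hx, hy⟩ | ⟨hy, hx⟩⟩ := h
  · exact Or.inl (pair_R hx hy)
  · exact Or.inr (pair_R hy hx)

@[simp] lemma ctrAdj_ctr_ctr (d k m : ℕ) :
    ctrAdj d (Vtx.ctr k) (Vtx.ctr m) = (k ≠ m ∧ 1 ≤ k ∧ k ≤ d ∧ 1 ≤ m ∧ m ≤ d) := rfl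
@[simp] lemma ctrAdj_ctr_elt (d k : ℕ) (a : List ℕ) :
    ctrAdj d (Vtx.ctr k) (Vtx.elt a) = (1 ≤ k ∧ k ≤ d ∧ a ∈ Tl d ∧ a.length = k) := rfl
@[simp] lemma ctrAdj_ctr_sub (d k m : ℕ) (j : Fin 2) :
    ctrAdj d (Vtx.ctr k) (Vtx.sub m j) = False := rfl
@[simp] lemma ctrAdj_elt (d : ℕ) (a : List ℕ) (y : Vtx) :
    ctrAdj d (Vtx.elt a) y = False := by cases y <;> rfl
@[simp] lemma ctrAdj_sub (d k : ℕ) (j : Fin 2) (y : Vtx) :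
    ctrAdj d (Vtx.sub k j) y = False := by cases y <;> rfl

lemma not_adj_elt_elt {d : ℕ} {a b : List ℕ} : ¬ GdAdj d (Vtx.elt a) (Vtx.elt b) := by
  rintro ⟨-, h | h | h⟩
  · rcases chainAdj_R h with h' | h' <;> simpa using h'
  · simp at h
  · simp at h

lemma not_adj_ctr_sub {d k m : ℕ} {j : Fin 2} : ¬ GdAdj d (Vtx.ctr k) (Vtx.sub m j) := by
  rintro ⟨-, h | h | h⟩
  · rcases chainAdj_R h with h' | h' <;> simpa using h'
  · simp at h
  · simp at h

lemma gdAdj_symm {d : ℕ} {x y : Vtx} (h : GdAdj d x y) : GdAdj d y x := by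
  obtain ⟨hne, h⟩ := h
  refine ⟨hne.symm, ?_⟩
  rcases h with ⟨i, hi⟩ | h | h
  · exact Or.inl ⟨i, hi.symm⟩
  · exact Or.inr (Or.inr h)
  · exact Or.inr (Or.inl h)

lemma adj_ctr_elt {d k : ℕ} {a : List ℕ} (h : GdAdj d (Vtx.ctr k) (Vtx.elt a)) :
    a.length = k := by
  obtain ⟨-, h | h | h⟩ := h
  · rcases chainAdj_R h with h' | h' <;> simpa using h'
  · exact h.2.2.2
  · simp at h

lemma adj_ctr_ctr {d k m : ℕ} (h : GdAdj d (Vtx.ctr k) (Vtx.ctr m)) :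
    k ≠ m ∧ 1 ≤ k ∧ k ≤ d ∧ 1 ≤ m ∧ m ≤ d := by
  obtain ⟨-, h | h | h⟩ := h
  · rcases chainAdj_R h with h' | h' <;> simpa using h'
  · exact h
  · exact ⟨Ne.symm h.1, h.2.2.2.1, h.2.2.2.2, h.2.1, h.2.2.1⟩

lemma adj_sub_R {d : ℕ} {x : Vtx} {k : ℕ} {j : Fin 2}
    (h : GdAdj d x (Vtx.sub k j)) (hx : ∀ m, x ≠ Vtx.ctr m) :
    R (Tl d) x (Vtx.sub k j) ∨ R (Tl d) (Vtx.sub k j) x := by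
  obtain ⟨-, h | h | h⟩ := h
  · exact chainAdj_R h
  · cases x with
    | ctr m => exact absurd rfl (hx m)
    | elt a => simp at h
    | sub m j' => simp at h
  · simp at h

lemma no_tri_ess_aux {d k : ℕ} {e : List ℕ}
    (hes : GdAdj d (Vtx.elt e) (Vtx.sub k 0))
    (het : GdAdj d (Vtx.elt e) (Vtx.sub k 1))
    (hcond : ∃ a b, (Tl d)[k]? = some a ∧ (Tl d)[k+1]? = some b ∧
      a.length = b.length) : False := by
  obtain ⟨a0, b0, hk, hk1, hlen⟩ := hcond
  have h1 : (Tl d)[k+1]? = some e := by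
    rcases adj_sub_R het (fun m h => by simp at h) with h' | h'
    · simp at h'
    · rw [R_sub_elt] at h'
      exact h'.1
  rcases adj_sub_R hes (fun m h => by simp at h) with h' | h'
  · rw [R_elt_sub] at h'
    have hke : (Tl d)[k]? = some e := h'.2
    have hlt : k < (Tl d).length := (List.getElem?_eq_some_iff.1 hke).1
    have := (List.getElem?_inj hlt (Tl_nodup d)).1 (hke.trans h1.symm)
    omega
  · rw [R_sub_elt] at h'
    obtain ⟨h1', a'', ha'', hiff⟩ := h'
    have hne : a''.length ≠ e.length := fun hl => by
      have : (0 : Fin 2) = 1 := hiff.2 hl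
      exact absurd this (by decide)
    have he1 : b0 = e := by rw [hk1] at h1; exact Option.some.inj h1
    have he2 : a0 = a'' := by rw [hk] at ha''; exact Option.some.inj ha''
    rw [← he2, ← he1] at hne
    exact hne hlen

lemma no_tri_ess {d : ℕ} {e : List ℕ} {k m : ℕ} {b c : Fin 2}
    (hes : GdAdj d (Vtx.elt e) (Vtx.sub k b))
    (het : GdAdj d (Vtx.elt e) (Vtx.sub m c))
    (hst : GdAdj d (Vtx.sub k b) (Vtx.sub m c)) : False := by
  rcases adj_sub_R (x := Vtx.sub k b) hst (fun p h => by simp at h) with h' | h' <;>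
    rw [R_sub_sub] at h'
  · obtain ⟨hb, hc, hmk, hcond⟩ := h'
    subst hb hc hmk
    exact no_tri_ess_aux hes het hcond
  · obtain ⟨hc, hb, hkm, hcond⟩ := h'
    subst hb hc hkm
    exact no_tri_ess_aux het hes hcond

lemma no_tri_sss {d : ℕ} {k m p : ℕ} {b c q : Fin 2}
    (hxy : GdAdj d (Vtx.sub k b) (Vtx.sub m c))
    (hyz : GdAdj d (Vtx.sub m c) (Vtx.sub p q))
    (hxz : GdAdj d (Vtx.sub k b) (Vtx.sub p q)) : False := by
  rcases adj_sub_R hxy (fun r h => by simp at h) with h' | h' <;>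
    rw [R_sub_sub] at h'
  · obtain ⟨hb, hc, hmk, -⟩ := h'
    rcases adj_sub_R hxz (fun r h => by simp at h) with h2 | h2 <;>
      rw [R_sub_sub] at h2
    · obtain ⟨-, hq, hpk, -⟩ := h2
      exact hyz.1 (by rw [hmk, hc, hpk, hq])
    · obtain ⟨-, h01, -⟩ := h2
      rw [hb] at h01
      exact absurd h01 (by decide)
  · obtain ⟨hc, hb, hkm, -⟩ := h'
    rcases adj_sub_R hyz (fun r h => by simp at h) with h2 | h2 <;>
      rw [R_sub_sub] at h2
    · obtain ⟨-, hq, hpm, -⟩ := h2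
      exact hxz.1 (by rw [hkm, hb, hpm, hq])
    · obtain ⟨-, h01, -⟩ := h2
      rw [hc] at h01
      exact absurd h01 (by decide)

lemma tri_ctr {d : ℕ} {x y z : Vtx} (hxy : GdAdj d x y) (hyz : GdAdj d y z)
    (hxz : GdAdj d x z) : ∃ k, x = Vtx.ctr k := by
  cases x with
  | ctr k => exact ⟨k, rfl⟩
  | elt a =>
    exfalso
    cases y with
    | elt b => exact not_adj_elt_elt hxy
    | ctr m =>
      cases z with
      | elt c => exact not_adj_elt_elt hxz
      | ctr p =>
        have h1 := adj_ctr_elt (gdAdj_symm hxy)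
        have h2 := adj_ctr_elt (gdAdj_symm hxz)
        exact (adj_ctr_ctr hyz).1 (by omega)
      | sub p q => exact not_adj_ctr_sub hyz
    | sub m c =>
      cases z with
      | elt c => exact not_adj_elt_elt hxz
      | ctr p => exact not_adj_ctr_sub (gdAdj_symm hyz)
      | sub p q => exact no_tri_ess hxy hxz hyz
  | sub k j =>
    exfalso
    cases y with
    | elt e =>
      cases z with
      | elt c => exact not_adj_elt_elt hyz
      | ctr p => exact not_adj_ctr_sub (gdAdj_symm hxz)
      | sub p q => exact no_tri_ess (gdAdj_symm hxy) hyz hxz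
    | ctr m => exact not_adj_ctr_sub (gdAdj_symm hxy)
    | sub m c =>
      cases z with
      | elt e => exact no_tri_ess (gdAdj_symm hxz) (gdAdj_symm hyz) hxy
      | ctr p => exact not_adj_ctr_sub (gdAdj_symm hyz)
      | sub p q => exact no_tri_sss hxy hyz hxz

/-- For `d ≥ 1` the graph `G_d` is diamond-free. -/
theorem stmt8 (d : ℕ) (hd : 1 ≤ d) : ¬ Nonempty (diamond ↪g Gd d) := by
  rintro ⟨f⟩
  have hadj : ∀ i j : Fin 4, diamond.Adj i j → GdAdj d (f i).1 (f j).1 :=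
    fun i j h => f.map_rel_iff.2 h
  have h01 := hadj 0 1 (by simp [diamond, SimpleGraph.deleteEdges_adj])
  have h02 := hadj 0 2 (by simp [diamond, SimpleGraph.deleteEdges_adj])
  have h03 := hadj 0 3 (by simp [diamond, SimpleGraph.deleteEdges_adj])
  have h12 := hadj 1 2 (by simp [diamond, SimpleGraph.deleteEdges_adj])
  have h13 := hadj 1 3 (by simp [diamond, SimpleGraph.deleteEdges_adj])
  obtain ⟨k2, e2⟩ := tri_ctr (gdAdj_symm h02) h01 (gdAdj_symm h12)
  obtain ⟨k3, e3⟩ := tri_ctr (gdAdj_symm h03) h01 (gdAdj_symm h13)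
  obtain ⟨k0, e0⟩ := tri_ctr h01 h12 h02
  rw [e0, e2] at h02
  rw [e0, e3] at h03
  have hb2 := adj_ctr_ctr h02
  have hb3 := adj_ctr_ctr h03
  have hne : f 2 ≠ f 3 := fun h => by
    have := f.injective h
    exact absurd this (by decide)
  have hk23 : k2 ≠ k3 := fun h => hne (Subtype.ext (by rw [e2, e3, h]))
  have hGadj : (Gd d).Adj (f 2) (f 3) := by
    show GdAdj d (f 2).1 (f 3).1
    rw [e2, e3]
    refine ⟨fun h => hk23 (by injection h), Or.inr (Or.inl ?_)⟩
    rw [ctrAdj_ctr_ctr]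
    exact ⟨hk23, hb2.2.2.2.1, hb2.2.2.2.2, hb3.2.2.2.1, hb3.2.2.2.2⟩
  have := f.map_rel_iff.1 hGadj
  simp [diamond, SimpleGraph.deleteEdges_adj] at this
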